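/- Assume that for every x ∈ X and u ∈ U, sup_{w ∈ W} l(x, u, w) ≥ 0, and that for every y ∈ Y the preimage h^{-1}{y} is a finite indexed set of at most M elements. If the optimal value J_⋆(y_0) = inf_{π ∈ Π} sup_N J_π^N(y_0) is bounded (finite) for every y_0 ∈ Y, then the value-iteration sequence V_0, V_1, V_2, ... is pointwise bounded above. -/

import Mathlib

open scoped BigOperators

noncomputable section

variable {X U W Y : Type*}

/-- The worst-case history `ρ_t(x, y_{0:t-1}, u_{0:t-1})`: the supremum (in `ℝ ∪ {-∞}`,
with `sSup ∅ = ⊥`) of accumulated stage costs over all disturbance sequences and initial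
states whose trajectory reaches `x` at time `t` and is consistent with the measurements. -/
noncomputable def rho (f : X → U → W → X) (h : X → Y) (l : X → U → W → ℝ)
    (t : ℕ) (x : X) (ys : ℕ → Y) (us : ℕ → U) : EReal :=
  sSup { c : EReal | ∃ (xs : ℕ → X) (ws : ℕ → W),
    xs t = x ∧
    (∀ τ < t, xs (τ + 1) = f (xs τ) (us τ) (ws τ)) ∧
    (∀ τ < t, h (xs τ) = ys τ) ∧
    c = ((∑ τ ∈ Finset.range t, l (xs τ) (us τ) (ws τ) : ℝ) : EReal) }

/-- Inputs generated causally by a strategy `π` from a measurement sequence: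
`u_t = μ_t(y_{0:t}, u_{0:t-1})`. -/
noncomputable def inputsOf (π : ℕ → List Y → List U → U) (ys : ℕ → Y) : ℕ → U
  | t => π t ((List.range (t + 1)).map ys) (List.ofFn fun i : Fin t => inputsOf π ys i)
  decreasing_by exact i.isLt

/-- Closed loop: state, list of past measurements and list of past inputs. -/
noncomputable def loop (f : X → U → W → X) (h : X → Y)
    (π : ℕ → List Y → List U → U) (x0 : X) (ws : ℕ → W) : ℕ → X × List Y × List U
  | 0 => (x0, [h x0], [])
  | t + 1 =>
    let p := loop f h π x0 ws t
    let u := π t p.2.1 p.2.2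
    let x' := f p.1 u (ws t)
    (x', p.2.1 ++ [h x'], p.2.2 ++ [u])

/-- Closed-loop state `x_t`. -/
noncomputable def cstate (f : X → U → W → X) (h : X → Y)
    (π : ℕ → List Y → List U → U) (x0 : X) (ws : ℕ → W) (t : ℕ) : X :=
  (loop f h π x0 ws t).1

/-- Closed-loop input `u_t = μ_t(y_{0:t}, u_{0:t-1})`. -/
noncomputable def cinput (f : X → U → W → X) (h : X → Y)
    (π : ℕ → List Y → List U → U) (x0 : X) (ws : ℕ → W) (t : ℕ) : U :=
  π t (loop f h π x0 ws t).2.1 (loop f h π x0 ws t).2.2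

/-- The worst-case `N`-horizon performance `J_π^N(y_0)`. -/
noncomputable def Jcost (f : X → U → W → X) (h : X → Y) (l : X → U → W → ℝ)
    (π : ℕ → List Y → List U → U) (N : ℕ) (y0 : Y) : EReal :=
  sSup { c : EReal | ∃ (x0 : X) (ws : ℕ → W), h x0 = y0 ∧
    c = ((∑ t ∈ Finset.range (N + 1),
      l (cstate f h π x0 ws t) (cinput f h π x0 ws t) (ws t) : ℝ) : EReal) }

/-- The information-state update `g` (componentwise), for preimages of `h`
enumerated by `ξ : Y → Fin M → X`. -/
noncomputable def gup {M : ℕ} (f : X → U → W → X) (l : X → U → W → ℝ)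
    (ξ : Y → Fin M → X) (r : Fin M → EReal) (ynext y : Y) (u : U) : Fin M → EReal :=
  fun i => sSup { c : EReal | ∃ (j : Fin M) (w : W),
    ξ ynext i = f (ξ y j) u w ∧ c = (l (ξ y j) u w : EReal) + r j }

/-- The information state `r_t`, defined recursively by `r_0 = 0` and
`r_t = g(r_{t-1}, y_t, y_{t-1}, u_{t-1})`. -/
noncomputable def rvec {M : ℕ} (f : X → U → W → X) (l : X → U → W → ℝ)
    (ξ : Y → Fin M → X) (ys : ℕ → Y) (us : ℕ → U) : ℕ → Fin M → EReal
  | 0 => 0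
  | t + 1 => gup f l ξ (rvec f l ξ ys us t) (ys (t + 1)) (ys t) (us t)

/-- The Bellman operator `B_u V(r, y) = sup_{v ∈ Y} V(g(r, v, y, u), v)`. -/
noncomputable def Bu {M : ℕ} (f : X → U → W → X) (l : X → U → W → ℝ)
    (ξ : Y → Fin M → X) (V : (Fin M → EReal) → Y → EReal) (u : U)
    (r : Fin M → EReal) (y : Y) : EReal :=
  ⨆ v : Y, V (gup f l ξ r v y u) v

/-- The Bellman operator `B V(r, y) = inf_{u ∈ U} B_u V(r, y)`. -/
noncomputable def Bop {M : ℕ} (f : X → U → W → X) (l : X → U → W → ℝ)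
    (ξ : Y → Fin M → X) (V : (Fin M → EReal) → Y → EReal)
    (r : Fin M → EReal) (y : Y) : EReal :=
  ⨅ u : U, Bu f l ξ V u r y

/-- The value iteration `V_0(r, y) = max_i r^i`, `V_{k+1} = B V_k`. -/
noncomputable def Vseq {M : ℕ} (f : X → U → W → X) (l : X → U → W → ℝ)
    (ξ : Y → Fin M → X) : ℕ → (Fin M → EReal) → Y → EReal
  | 0 => fun r _ => ⨆ i, r i
  | k + 1 => fun r y => Bop f l ξ (Vseq f l ξ k) r y

/-- The (possibly time-varying) information-state feedback policy
`μ_t(y_{0:t}, u_{0:t-1}) = η_t(r_t, y_t)`, where `r_0 = 0` and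
`r_{t+1} = g(r_t, y_{t+1}, y_t, u_t)`. -/
noncomputable def infoStrategyT {M : ℕ} [Nonempty Y] [Nonempty U]
    (f : X → U → W → X) (l : X → U → W → ℝ) (ξ : Y → Fin M → X)
    (η : ℕ → (Fin M → EReal) → Y → U) : ℕ → List Y → List U → U :=
  fun t ysl usl =>
    η t (rvec f l ξ (fun τ => ysl.getD τ (Classical.arbitrary Y))
          (fun τ => usl.getD τ (Classical.arbitrary U)) (ysl.length - 1))
      (ysl.getD (ysl.length - 1) (Classical.arbitrary Y))

/-- Stationary information-state feedback policy `μ_t(y_{0:t}, u_{0:t-1}) = η(r_t, y_t)`. -/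
noncomputable def infoStrategy {M : ℕ} [Nonempty Y] [Nonempty U]
    (f : X → U → W → X) (l : X → U → W → ℝ) (ξ : Y → Fin M → X)
    (η : (Fin M → EReal) → Y → U) : ℕ → List Y → List U → U :=
  infoStrategyT f l ξ (fun _ => η)

end

section Aux

variable {X U W Y : Type*}

private lemma ereal_coe_add_neg (a : ℝ) : (a : EReal) + ((-a : ℝ) : EReal) = 0 := by
  rw [← EReal.coe_add]; norm_num

private lemma ereal_coe_neg_add (a : ℝ) : ((-a : ℝ) : EReal) + (a : EReal) = 0 := by
  rw [← EReal.coe_add]; norm_num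

private lemma EReal_add_sSup_le (a : ℝ) (T : Set EReal) (R : EReal)
    (h : ∀ c ∈ T, (a : EReal) + c ≤ R) : (a : EReal) + sSup T ≤ R := by
  have h1 : ∀ c ∈ T, c ≤ R + ((-a : ℝ) : EReal) := by
    intro c hc
    have h2 := add_le_add_left (h c hc) ((-a : ℝ) : EReal)
    rwa [add_comm (a : EReal) c, add_assoc, ereal_coe_add_neg, add_zero] at h2
  calc (a : EReal) + sSup T ≤ (a : EReal) + (R + ((-a : ℝ) : EReal)) :=
        add_le_add_right (sSup_le h1) _
    _ = R := by rw [add_comm R, ← add_assoc, ereal_coe_add_neg, zero_add]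

private lemma EReal_iInf_add_le {ι : Sort*} (a : ℝ) (g : ι → EReal) :
    (⨅ i, g i + (a : EReal)) ≤ (⨅ i, g i) + (a : EReal) := by
  have h1 : ∀ i, (⨅ j, g j + (a : EReal)) + ((-a : ℝ) : EReal) ≤ g i := by
    intro i
    have h2 := add_le_add_left (iInf_le (fun j => g j + (a : EReal)) i) ((-a : ℝ) : EReal)
    rwa [add_assoc, ereal_coe_add_neg, add_zero] at h2
  have h3 := add_le_add_left (le_iInf h1) (a : EReal)
  calc (⨅ i, g i + (a : EReal))
      = ((⨅ i, g i + (a : EReal)) + ((-a : ℝ) : EReal)) + (a : EReal) := by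
        rw [add_assoc, ereal_coe_neg_add, add_zero]
    _ ≤ (⨅ i, g i) + (a : EReal) := h3

private lemma inputsOf_congr (π : ℕ → List Y → List U → U) (ys ys' : ℕ → Y) :
    ∀ t, (∀ τ ≤ t, ys τ = ys' τ) → inputsOf π ys t = inputsOf π ys' t := by
  intro t
  induction t using Nat.strong_induction_on with
  | _ t ih =>
    intro hag
    rw [inputsOf, inputsOf]
    have e1 : (List.range (t + 1)).map ys = (List.range (t + 1)).map ys' :=
      List.map_congr_left fun a ha => hag a (Nat.lt_succ_iff.mp (List.mem_range.mp ha))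
    have e2 : (List.ofFn fun i : Fin t => inputsOf π ys i)
        = List.ofFn fun i : Fin t => inputsOf π ys' i :=
      congrArg List.ofFn (funext fun i =>
        ih i i.isLt fun τ hτ => hag τ (hτ.trans i.isLt.le))
    rw [e1, e2]

private lemma rvec_congr {M : ℕ} (f : X → U → W → X) (l : X → U → W → ℝ) (ξ : Y → Fin M → X)
    (ys ys' : ℕ → Y) (us us' : ℕ → U) :
    ∀ t, (∀ τ ≤ t, ys τ = ys' τ) → (∀ τ < t, us τ = us' τ) →
      rvec f l ξ ys us t = rvec f l ξ ys' us' t := by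
  intro t
  induction t with
  | zero => intro _ _; rfl
  | succ t ih =>
    intro hy hu
    show gup f l ξ (rvec f l ξ ys us t) (ys (t + 1)) (ys t) (us t) = _
    rw [ih (fun τ h => hy τ (h.trans (Nat.le_succ t))) (fun τ h => hu τ (h.trans (Nat.lt_succ_self t))),
      hy (t + 1) le_rfl, hy t (Nat.le_succ t), hu t (Nat.lt_succ_self t)]
    rfl

private lemma loop_meas (f : X → U → W → X) (h : X → Y) (π : ℕ → List Y → List U → U)
    (x0 : X) (ws : ℕ → W) :
    ∀ t, (loop f h π x0 ws t).2.1
      = (List.range (t + 1)).map (fun σ => h (cstate f h π x0 ws σ)) := by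
  intro t
  induction t with
  | zero => simp [loop, cstate, List.range_succ]
  | succ t ih =>
    have e : (loop f h π x0 ws (t + 1)).2.1
        = (loop f h π x0 ws t).2.1 ++ [h (cstate f h π x0 ws (t + 1))] := rfl
    rw [e, List.range_succ, List.map_append, ih]
    rfl

private lemma loop_inp (f : X → U → W → X) (h : X → Y) (π : ℕ → List Y → List U → U)
    (x0 : X) (ws : ℕ → W) :
    ∀ t, (loop f h π x0 ws t).2.2 = List.ofFn (fun i : Fin t => cinput f h π x0 ws i) := by
  intro t
  induction t with
  | zero => simp [loop]
  | succ t ih =>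
    have e : (loop f h π x0 ws (t + 1)).2.2
        = (loop f h π x0 ws t).2.2 ++ [cinput f h π x0 ws t] := rfl
    rw [e, ih, List.ofFn_succ', List.concat_eq_append]
    simp

private lemma cinput_eq (f : X → U → W → X) (h : X → Y) (π : ℕ → List Y → List U → U)
    (x0 : X) (ws : ℕ → W) :
    ∀ t, cinput f h π x0 ws t = inputsOf π (fun σ => h (cstate f h π x0 ws σ)) t := by
  intro t
  induction t using Nat.strong_induction_on with
  | _ t ih =>
    show π t (loop f h π x0 ws t).2.1 (loop f h π x0 ws t).2.2 = _
    rw [inputsOf, loop_meas, loop_inp]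
    exact congrArg _ (congrArg List.ofFn (funext fun i => ih i i.isLt))

private lemma closed_loop_match (f : X → U → W → X) (h : X → Y)
    (π : ℕ → List Y → List U → U) (ys : ℕ → Y) (xs : ℕ → X) (ws : ℕ → W) (t : ℕ)
    (hdyn : ∀ τ < t, xs (τ + 1) = f (xs τ) (inputsOf π ys τ) (ws τ))
    (hmeas : ∀ τ < t, h (xs τ) = ys τ) :
    ∀ τ, τ < t → cstate f h π (xs 0) ws τ = xs τ ∧ cinput f h π (xs 0) ws τ = inputsOf π ys τ := by
  intro τ
  induction τ using Nat.strong_induction_on with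
  | _ τ ih =>
    intro hτ
    have hstate : cstate f h π (xs 0) ws τ = xs τ := by
      cases τ with
      | zero => rfl
      | succ σ =>
        have hs := ih σ (Nat.lt_succ_self σ) (lt_trans (Nat.lt_succ_self σ) hτ)
        show f (cstate f h π (xs 0) ws σ) (cinput f h π (xs 0) ws σ) (ws σ) = xs (σ + 1)
        rw [hs.1, hs.2, hdyn σ (lt_trans (Nat.lt_succ_self σ) hτ)]
    refine ⟨hstate, ?_⟩
    rw [cinput_eq]
    refine inputsOf_congr π _ ys τ fun σ hσ => ?_
    have hsτ : cstate f h π (xs 0) ws σ = xs σ := by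
      rcases Nat.lt_or_ge σ τ with hl | hg
      · exact (ih σ hl (lt_trans hl hτ)).1
      · have hστ : σ = τ := le_antisymm hσ hg
        rw [hστ]; exact hstate
    rw [hsτ]
    exact hmeas σ (lt_of_le_of_lt hσ hτ)

private lemma rvec_le_rho {M : ℕ} [Nonempty W] (f : X → U → W → X) (h : X → Y)
    (l : X → U → W → ℝ) (ξ : Y → Fin M → X)
    (hξ : ∀ y : Y, Set.range (ξ y) = {x : X | h x = y})
    (ys : ℕ → Y) (us : ℕ → U) :
    ∀ t (i : Fin M), rvec f l ξ ys us t i ≤ rho f h l t (ξ (ys t) i) ys us := by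
  intro t
  induction t with
  | zero =>
    intro i
    refine le_sSup ?_
    refine ⟨fun _ => ξ (ys 0) i, fun _ => Classical.arbitrary W, rfl,
      fun τ hτ => absurd hτ (Nat.not_lt_zero τ), fun τ hτ => absurd hτ (Nat.not_lt_zero τ), ?_⟩
    simp [rvec]
  | succ t ih =>
    intro i
    have e : rvec f l ξ ys us (t + 1) i
        = sSup {c : EReal | ∃ (j : Fin M) (w : W),
            ξ (ys (t + 1)) i = f (ξ (ys t) j) (us t) w ∧
            c = ((l (ξ (ys t) j) (us t) w : ℝ) : EReal) + rvec f l ξ ys us t j} := rfl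
    rw [e]
    refine sSup_le fun c hc => ?_
    obtain ⟨j, w, hfw, hce⟩ := hc
    rw [hce]
    refine le_trans (add_le_add_right (ih j) _) ?_
    refine EReal_add_sSup_le _ _ _ fun c0 hc0 => ?_
    obtain ⟨xs, ws, hxt, hdyn, hmeas, hc0e⟩ := hc0
    refine le_sSup ⟨Function.update xs (t + 1) (ξ (ys (t + 1)) i),
      Function.update ws t w, Function.update_self _ _ _, ?_, ?_, ?_⟩
    · intro τ hτ
      rcases Nat.lt_succ_iff_lt_or_eq.mp hτ with hlt | heq
      · rw [Function.update_of_ne (show τ + 1 ≠ t + 1 by omega),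
          Function.update_of_ne (show τ ≠ t + 1 by omega),
          Function.update_of_ne (show τ ≠ t by omega)]
        exact hdyn τ hlt
      · rw [heq, Function.update_self, Function.update_of_ne (show t ≠ t + 1 by omega),
          Function.update_self, hxt]
        exact hfw
    · intro τ hτ
      rcases Nat.lt_succ_iff_lt_or_eq.mp hτ with hlt | heq
      · rw [Function.update_of_ne (show τ ≠ t + 1 by omega)]
        exact hmeas τ hlt
      · rw [heq, Function.update_of_ne (show t ≠ t + 1 by omega), hxt]
        have hmem : ξ (ys t) j ∈ Set.range (ξ (ys t)) := ⟨j, rfl⟩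
        rw [hξ] at hmem
        exact hmem
    · have hsum : (∑ τ ∈ Finset.range (t + 1),
          l (Function.update xs (t + 1) (ξ (ys (t + 1)) i) τ) (us τ)
            (Function.update ws t w τ))
          = (∑ τ ∈ Finset.range t, l (xs τ) (us τ) (ws τ)) + l (ξ (ys t) j) (us t) w := by
        rw [Finset.sum_range_succ]
        congr 1
        · refine Finset.sum_congr rfl fun τ hτ => ?_
          have hτ' := Finset.mem_range.mp hτ
          rw [Function.update_of_ne (show τ ≠ t + 1 by omega),
            Function.update_of_ne (show τ ≠ t by omega)]
        · rw [Function.update_of_ne (show t ≠ t + 1 by omega), Function.update_self, hxt]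
      rw [hc0e, hsum, EReal.coe_add]
      exact add_comm _ _

private lemma rho_le_B (f : X → U → W → X) (h : X → Y) (l : X → U → W → ℝ)
    (π : ℕ → List Y → List U → U) (y0 : Y) (B : EReal)
    (hB0 : (0 : EReal) ≤ B) (hB : ∀ N, Jcost f h l π N y0 ≤ B)
    (ys : ℕ → Y) (hy0 : ys 0 = y0) (t : ℕ) (x : X) :
    rho f h l t x ys (inputsOf π ys) ≤ B := by
  refine sSup_le fun c hc => ?_
  obtain ⟨xs, ws, hxt, hdyn, hmeas, hce⟩ := hc
  cases t with
  | zero => rw [hce]; simpa using hB0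
  | succ s =>
    refine le_trans ?_ (hB s)
    refine le_sSup ⟨xs 0, ws, by rw [hmeas 0 (Nat.succ_pos s), hy0], ?_⟩
    rw [hce]
    congr 1
    refine Finset.sum_congr rfl fun τ hτ => ?_
    have hτ' : τ < s + 1 := Finset.mem_range.mp hτ
    have hm := closed_loop_match f h π ys xs ws (s + 1) hdyn hmeas τ hτ'
    rw [hm.1, hm.2]

private lemma Vseq_bot {M : ℕ} [Nonempty U] (f : X → U → W → X) (l : X → U → W → ℝ)
    (ξ : Y → Fin M → X) :
    ∀ k (r : Fin M → EReal), (∀ i, r i = ⊥) → ∀ y, Vseq f l ξ k r y ≤ ⊥ := by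
  intro k
  induction k with
  | zero =>
    intro r hr y
    simp only [Vseq]
    exact iSup_le fun i => (hr i).le
  | succ k ih =>
    intro r hr y
    simp only [Vseq, Bop, Bu]
    have hg : ∀ (u : U) (v : Y) (i : Fin M), gup f l ξ r v y u i = ⊥ := by
      intro u v i
      have e : gup f l ξ r v y u i = sSup {c : EReal | ∃ (j : Fin M) (w : W),
          ξ v i = f (ξ y j) u w ∧ c = ((l (ξ y j) u w : ℝ) : EReal) + r j} := rfl
      rw [e]
      refine le_bot_iff.mp (sSup_le fun c hc => ?_)
      obtain ⟨j, w, _, hce⟩ := hc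
      rw [hce, hr j, EReal.add_bot]
    refine le_trans (iInf_le _ (Classical.arbitrary U)) ?_
    refine iSup_le fun v => ?_
    exact ih _ (hg _ v) v

private lemma Vseq_shift {M : ℕ} (f : X → U → W → X) (l : X → U → W → ℝ)
    (ξ : Y → Fin M → X) (c : ℝ) :
    ∀ k (r r' : Fin M → EReal), (∀ i, r i ≤ r' i + (c : EReal)) → ∀ y,
      Vseq f l ξ k r y ≤ Vseq f l ξ k r' y + (c : EReal) := by
  intro k
  induction k with
  | zero =>
    intro r r' hrr y
    simp only [Vseq]
    exact iSup_le fun i => (hrr i).trans (add_le_add_left (le_iSup _ i) _)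
  | succ k ih =>
    intro r r' hrr y
    simp only [Vseq, Bop, Bu]
    have key : ∀ u, (⨆ v, Vseq f l ξ k (gup f l ξ r v y u) v)
        ≤ (⨆ v, Vseq f l ξ k (gup f l ξ r' v y u) v) + (c : EReal) := by
      intro u
      refine iSup_le fun v => ?_
      have hg : ∀ i, gup f l ξ r v y u i ≤ gup f l ξ r' v y u i + (c : EReal) := by
        intro i
        have e1 : gup f l ξ r v y u i = sSup {d : EReal | ∃ (j : Fin M) (w : W),
            ξ v i = f (ξ y j) u w ∧ d = ((l (ξ y j) u w : ℝ) : EReal) + r j} := rfl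
        have e2 : gup f l ξ r' v y u i = sSup {d : EReal | ∃ (j : Fin M) (w : W),
            ξ v i = f (ξ y j) u w ∧ d = ((l (ξ y j) u w : ℝ) : EReal) + r' j} := rfl
        rw [e1, e2]
        refine sSup_le fun d hd => ?_
        obtain ⟨j, w, hfw, hde⟩ := hd
        rw [hde]
        calc ((l (ξ y j) u w : ℝ) : EReal) + r j
            ≤ ((l (ξ y j) u w : ℝ) : EReal) + (r' j + (c : EReal)) := add_le_add_right (hrr j) _
          _ = (((l (ξ y j) u w : ℝ) : EReal) + r' j) + (c : EReal) := (add_assoc _ _ _).symm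
          _ ≤ sSup {d : EReal | ∃ (j : Fin M) (w : W),
              ξ v i = f (ξ y j) u w ∧ d = ((l (ξ y j) u w : ℝ) : EReal) + r' j} + (c : EReal) := by
              refine add_le_add_left (le_sSup ?_) _
              exact ⟨j, w, hfw, rfl⟩
      exact (ih _ _ hg v).trans
        (add_le_add_left (le_iSup (fun v => Vseq f l ξ k (gup f l ξ r' v y u) v) v) _)
    exact le_trans (iInf_mono key) (EReal_iInf_add_le c _)

private lemma Vseq_le_B {M : ℕ} [Nonempty W] (f : X → U → W → X) (h : X → Y)
    (l : X → U → W → ℝ) (ξ : Y → Fin M → X)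
    (hξ : ∀ y : Y, Set.range (ξ y) = {x : X | h x = y})
    (π : ℕ → List Y → List U → U) (y0 : Y) (B : EReal)
    (hB0 : (0 : EReal) ≤ B) (hB : ∀ N, Jcost f h l π N y0 ≤ B) :
    ∀ k t (ys : ℕ → Y), ys 0 = y0 →
      Vseq f l ξ k (rvec f l ξ ys (inputsOf π ys) t) (ys t) ≤ B := by
  intro k
  induction k with
  | zero =>
    intro t ys hy0
    simp only [Vseq]
    refine iSup_le fun i => ?_
    exact (rvec_le_rho f h l ξ hξ ys (inputsOf π ys) t i).trans
      (rho_le_B f h l π y0 B hB0 hB ys hy0 t _)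
  | succ k ih =>
    intro t ys hy0
    simp only [Vseq, Bop, Bu]
    refine le_trans (iInf_le _ (inputsOf π ys t)) ?_
    refine iSup_le fun v => ?_
    have h0 : Function.update ys (t + 1) v 0 = y0 := by
      rw [Function.update_of_ne (show 0 ≠ t + 1 by omega)]; exact hy0
    have ht : Function.update ys (t + 1) v t = ys t :=
      Function.update_of_ne (show t ≠ t + 1 by omega) _ _
    have htv : Function.update ys (t + 1) v (t + 1) = v := Function.update_self _ _ _
    have hus : inputsOf π (Function.update ys (t + 1) v) t = inputsOf π ys t :=
      inputsOf_congr _ _ _ t fun σ hσ => Function.update_of_ne (by omega) _ _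
    have hrv : rvec f l ξ (Function.update ys (t + 1) v)
          (inputsOf π (Function.update ys (t + 1) v)) t
        = rvec f l ξ ys (inputsOf π ys) t :=
      rvec_congr _ _ _ _ _ _ _ t (fun τ hτ => Function.update_of_ne (by omega) _ _)
        (fun τ hτ => inputsOf_congr _ _ _ τ fun σ hσ => Function.update_of_ne (by omega) _ _)
    have key := ih (t + 1) (Function.update ys (t + 1) v) h0
    rw [htv] at key
    have hstep : rvec f l ξ (Function.update ys (t + 1) v)
          (inputsOf π (Function.update ys (t + 1) v)) (t + 1)
        = gup f l ξ (rvec f l ξ ys (inputsOf π ys) t) v (ys t) (inputsOf π ys t) := by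
      show gup f l ξ (rvec f l ξ (Function.update ys (t + 1) v)
          (inputsOf π (Function.update ys (t + 1) v)) t)
          (Function.update ys (t + 1) v (t + 1)) (Function.update ys (t + 1) v t)
          (inputsOf π (Function.update ys (t + 1) v) t) = _
      rw [hrv, htv, ht, hus]
    rw [hstep] at key
    exact key

end Aux

/-- Under the positivity and finite-preimage assumptions, if the optimal
value `J_⋆(y_0) = inf_π sup_N J_π^N(y_0)` is finite for every `y_0 ∈ Y`, then the
value-iteration sequence `V_0, V_1, V_2, …` is pointwise bounded above (on the domain
`(ℝ ∪ {-∞})^M × Y`). -/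
theorem VI_bounded_of_value_bounded {X U W Y : Type*} [Nonempty X] [Nonempty U]
    [Nonempty W] [Nonempty Y] {M : ℕ} (f : X → U → W → X) (h : X → Y)
    (hsurj : Function.Surjective h) (l : X → U → W → ℝ) (ξ : Y → Fin M → X)
    (pos : ∀ (x : X) (u : U), (0 : EReal) ≤ ⨆ w : W, (l x u w : EReal))
    (hξ : ∀ y : Y, Set.range (ξ y) = {x : X | h x = y})
    (hJ : ∀ y0 : Y,
      (⨅ π : ℕ → List Y → List U → U, ⨆ N : ℕ, Jcost f h l π N y0) < ⊤) :
    ∀ (r : Fin M → EReal), (∀ i, r i ≠ ⊤) → ∀ y : Y,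
      (⨆ k : ℕ, Vseq f l ξ k r y) < ⊤ := by
  intro r hr y
  obtain ⟨π, hπ⟩ := iInf_lt_iff.mp (hJ y)
  have hBtop : (⨆ N, Jcost f h l π N y) ≠ ⊤ := hπ.ne
  have hB0 : (0 : EReal) ≤ ⨆ N, Jcost f h l π N y := by
    obtain ⟨x0, hx0⟩ := hsurj y
    refine le_trans ?_ (le_iSup (fun N => Jcost f h l π N y) 0)
    refine le_trans (pos x0 (π 0 [h x0] [])) ?_
    refine iSup_le fun w => ?_
    refine le_sSup ⟨x0, fun _ => w, hx0, ?_⟩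
    simp [cstate, cinput, loop, Finset.sum_range_one]
  have hBN : ∀ N, Jcost f h l π N y ≤ ⨆ N, Jcost f h l π N y :=
    fun N => le_iSup (fun N => Jcost f h l π N y) N
  by_cases hbot : ∀ i, r i = ⊥
  · exact lt_of_le_of_lt (iSup_le fun k => Vseq_bot f l ξ k r hbot y) (lt_of_le_of_lt le_rfl bot_lt_top)
  · push_neg at hbot
    obtain ⟨i1, hi1⟩ := hbot
    haveI : Nonempty (Fin M) := ⟨i1⟩
    obtain ⟨i₀, hmax⟩ := Finite.exists_max r
    have hi₀bot : r i₀ ≠ ⊥ := by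
      intro hc
      exact hi1 (le_bot_iff.mp (hc ▸ hmax i1))
    obtain ⟨c, hc⟩ : ∃ c : ℝ, r i₀ = (c : EReal) :=
      ⟨(r i₀).toReal, (EReal.coe_toReal (hr i₀) hi₀bot).symm⟩
    have hshift := Vseq_shift f l ξ c
    have hzero : ∀ k, Vseq f l ξ k (0 : Fin M → EReal) y ≤ ⨆ N, Jcost f h l π N y := by
      intro k
      have hle := Vseq_le_B f h l ξ hξ π y (⨆ N, Jcost f h l π N y) hB0 hBN k 0 (fun _ => y) rfl
      simpa [rvec] using hle
    refine lt_of_le_of_lt (iSup_le fun k => ?_)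
      (EReal.add_lt_top hBtop (EReal.coe_ne_top c))
    refine le_trans (hshift k r 0 (fun i => ?_) y) (add_le_add_left (hzero k) _)
    rw [Pi.zero_apply, zero_add, ← hc]
    exact hmax i
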